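/- arXiv:1106.0719 — 3 statements merged into one kernel-verified Lean document; each statement's English description precedes it below -/
import Mathlib

section
/- The intertwining relation L ∘ R^♯ = R^♯ ∘ J holds: for any nonnegative measurable f on ℝ^d and any x = (x'', x_{d-1}, x_d) ∈ ℝ^{d-2} × ℝ × ℝ, R^♯f(x'', x_d, x_{d-1}) = R^♯(Jf)(x'', x_{d-1}, x_d). -/
open MeasureTheory
open scoped ENNReal

/-- `R♯ f (x) = ∫_{ℝ^{d-1}} f(y', x_d + y'·x') dy'` for nonnegative measurable `f`,
with `ℝ^d = ℝ^{d-2} × ℝ × ℝ`, `x = (x'', x_{d-1}, x_d)`, `x' = (x'', x_{d-1})`. -/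
noncomputable def Rsharp (d : ℕ) (f : EuclideanSpace ℝ (Fin (d-2)) × ℝ × ℝ → ℝ≥0∞) :
    EuclideanSpace ℝ (Fin (d-2)) × ℝ × ℝ → ℝ≥0∞ := fun x =>
  ∫⁻ y' : EuclideanSpace ℝ (Fin (d-2)) × ℝ,
    f (y'.1, y'.2, x.2.2 + (inner ℝ y'.1 x.1 + y'.2 * x.2.1))

/-- `J f (u,s,t) = |s|^{-d} f(s⁻¹u, s⁻¹, s⁻¹t)` for `s ≠ 0`. -/
noncomputable def Jnn (d : ℕ) (f : EuclideanSpace ℝ (Fin (d-2)) × ℝ × ℝ → ℝ≥0∞) :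
    EuclideanSpace ℝ (Fin (d-2)) × ℝ × ℝ → ℝ≥0∞ := fun p =>
  if p.2.1 = 0 then 0 else
    ENNReal.ofReal (|p.2.1|⁻¹ ^ d) * f (p.2.1⁻¹ • p.1, p.2.1⁻¹, p.2.1⁻¹ * p.2.2)

/-- The intertwining relation `L ∘ R♯ = R♯ ∘ J`. -/
theorem stmt3 (d : ℕ) (hd : 2 ≤ d)
    (f : EuclideanSpace ℝ (Fin (d-2)) × ℝ × ℝ → ℝ≥0∞) (hf : Measurable f)
    (x'' : EuclideanSpace ℝ (Fin (d-2))) (xdm1 xd : ℝ) :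
    Rsharp d f (x'', xd, xdm1) = Rsharp d (Jnn d f) (x'', xdm1, xd) := by
  classical
  have hJm : Measurable (Jnn d f) := by
    unfold Jnn
    apply Measurable.ite
    · exact measurable_fst.comp measurable_snd (measurableSet_singleton 0)
    · exact measurable_const
    · exact (ENNReal.measurable_ofReal.comp ((measurable_snd.fst.abs.inv).pow_const d)).mul
        (hf.comp' (((measurable_snd.fst.inv).smul measurable_fst).prodMk
          ((measurable_snd.fst.inv).prodMk (measurable_snd.fst.inv.mul measurable_snd.snd))))
  set G : ℝ → ℝ≥0∞ := fun t => ∫⁻ z : EuclideanSpace ℝ (Fin (d-2)), f (z, t, xdm1 + (inner ℝ z x'' + t * xd)) with hGdef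
  set H : ℝ → ℝ≥0∞ := fun s => ∫⁻ z : EuclideanSpace ℝ (Fin (d-2)), Jnn d f (z, s, xd + (inner ℝ z x'' + s * xdm1))
    with hHdef
  have tuple_meas : ∀ a b : ℝ, Measurable (fun y' : EuclideanSpace ℝ (Fin (d-2)) × ℝ =>
      (y'.1, y'.2, a + ((inner ℝ y'.1 x'' : ℝ) + y'.2 * b))) := fun a b =>
    measurable_fst.prodMk (measurable_snd.prodMk (measurable_const.add
      (((continuous_fst.inner continuous_const).measurable).add
        (measurable_snd.mul measurable_const))))
  have hA : Rsharp d f (x'', xd, xdm1) = ∫⁻ t, G t := by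
    simp only [Rsharp, hGdef]
    rw [Measure.volume_eq_prod]
    exact lintegral_prod_symm' _ (hf.comp' (tuple_meas xdm1 xd))
  have hB : Rsharp d (Jnn d f) (x'', xdm1, xd) = ∫⁻ s, H s := by
    simp only [Rsharp, hHdef]
    rw [Measure.volume_eq_prod]
    exact lintegral_prod_symm' _ (hJm.comp' (tuple_meas xd xdm1))
  have hC : ∀ s : ℝ, s ≠ 0 → H s = ENNReal.ofReal |(-(s ^ 2)⁻¹)| * G s⁻¹ := by
    intro s hs
    have hs' : (s⁻¹ : ℝ) ≠ 0 := inv_ne_zero hs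
    have hgm : Measurable (fun w : EuclideanSpace ℝ (Fin (d-2)) => f (w, s⁻¹, xdm1 + ((inner ℝ w x'' : ℝ) + s⁻¹ * xd))) :=
      hf.comp' (measurable_id.prodMk (measurable_const.prodMk (measurable_const.add
        (((continuous_id.inner continuous_const).measurable).add measurable_const))))
    have step1 : H s = ENNReal.ofReal (|s|⁻¹ ^ d) *
        ∫⁻ z : EuclideanSpace ℝ (Fin (d-2)), f (s⁻¹ • z, s⁻¹, xdm1 + ((inner ℝ (s⁻¹ • z) x'' : ℝ) + s⁻¹ * xd)) := by
      rw [hHdef]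
      rw [← lintegral_const_mul' _ _ ENNReal.ofReal_ne_top]
      apply lintegral_congr
      intro z
      have h3 : s⁻¹ * (xd + ((inner ℝ z x'' : ℝ) + s * xdm1))
          = xdm1 + ((inner ℝ (s⁻¹ • z) x'' : ℝ) + s⁻¹ * xd) := by
        rw [real_inner_smul_left]
        field_simp
        ring
      simp only [Jnn, hs, if_false, h3]
    have hmap := Measure.map_addHaar_smul (volume : Measure (EuclideanSpace ℝ (Fin (d-2)))) hs'
    have step2 := lintegral_map (μ := (volume : Measure (EuclideanSpace ℝ (Fin (d-2))))) hgm (measurable_const_smul (s⁻¹ : ℝ) :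
      Measurable (fun z : EuclideanSpace ℝ (Fin (d-2)) => s⁻¹ • z))
    rw [hmap, lintegral_smul_measure] at step2
    rw [step1, ← step2, smul_eq_mul, ← mul_assoc, ← ENNReal.ofReal_mul (by positivity)]
    rw [hGdef]
    congr 2
    have h2 : d - 2 + 2 = d := Nat.sub_add_cancel hd
    have habs : |s| ≠ 0 := abs_ne_zero.mpr hs
    have h4 : |((s⁻¹ : ℝ) ^ Module.finrank ℝ (EuclideanSpace ℝ (Fin (d-2))))⁻¹|
        = |s| ^ (d - 2) := by
      rw [finrank_euclideanSpace_fin]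
      simp [abs_inv, abs_pow, inv_pow, inv_inv]
    rw [h4]
    calc |s|⁻¹ ^ d * |s| ^ (d - 2)
        = |s|⁻¹ ^ (d - 2 + 2) * |s| ^ (d - 2) := by rw [h2]
      _ = (|s|⁻¹ * |s|) ^ (d - 2) * |s|⁻¹ ^ 2 := by rw [pow_add, mul_pow]; ring
      _ = |(-(s ^ 2)⁻¹)| := by
          rw [inv_mul_cancel₀ habs, one_pow, one_mul, abs_neg, abs_inv, abs_pow, inv_pow]
  -- change of variables in one dimension
  have hS : MeasurableSet ({0}ᶜ : Set ℝ) := (measurableSet_singleton 0).compl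
  have himg : (fun s : ℝ => s⁻¹) '' {0}ᶜ = {0}ᶜ := by
    ext t
    simp only [Set.mem_image, Set.mem_compl_iff, Set.mem_singleton_iff]
    constructor
    · rintro ⟨a, ha, rfl⟩; exact inv_ne_zero ha
    · intro ht; exact ⟨t⁻¹, inv_ne_zero ht, inv_inv t⟩
  have hinj : Set.InjOn (fun s : ℝ => s⁻¹) {0}ᶜ := fun a _ b _ h => by
    simpa using congrArg (·⁻¹) h
  have hder : ∀ s ∈ ({0}ᶜ : Set ℝ), HasFDerivWithinAt (fun s : ℝ => s⁻¹)
      (ContinuousLinearMap.smulRight (1 : ℝ →L[ℝ] ℝ) (-(s ^ 2)⁻¹)) {0}ᶜ s := fun s hs =>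
    ((hasDerivAt_inv (by simpa using hs)).hasDerivWithinAt).hasFDerivWithinAt
  have hcv := lintegral_image_eq_lintegral_abs_det_fderiv_mul volume hS hder hinj G
  rw [himg] at hcv
  simp only [ContinuousLinearMap.det_smulRight, ContinuousLinearMap.one_apply, one_mul] at hcv
  rw [hA, hB]
  rw [← restrict_compl_singleton (μ := (volume : Measure ℝ)) (0 : ℝ)]
  rw [hcv]
  apply setLIntegral_congr_fun hS
  intro s hs
  exact (hC s (by simpa using hs)).symm
end

section
/- For any nonnegative measurable f on ℝ^d, ‖R^♯(Jf)‖_{L^{d+1}(ℝ^d)} = ‖R^♯ f‖_{L^{d+1}(ℝ^d)}. -/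
open MeasureTheory
open scoped ENNReal

lemma lintegral_comp_smul_E {n : ℕ} (g : EuclideanSpace ℝ (Fin n) → ℝ≥0∞)
    (hg : Measurable g) {r : ℝ} (hr : r ≠ 0) :
    ∫⁻ x, g (r • x) = ENNReal.ofReal |(r ^ n)⁻¹| * ∫⁻ x, g x := by
  rw [← smul_eq_mul, ← lintegral_smul_measure]
  rw [show ENNReal.ofReal |(r ^ n)⁻¹| • (volume : Measure (EuclideanSpace ℝ (Fin n)))
      = Measure.map (r • ·) volume by
    rw [Measure.map_addHaar_smul volume hr, finrank_euclideanSpace_fin]]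
  rw [lintegral_map hg (measurable_const_smul r)]

lemma lintegral_inv_change (g : ℝ → ℝ≥0∞) :
    ∫⁻ x, ENNReal.ofReal |(x ^ 2)⁻¹| * g x⁻¹ = ∫⁻ x, g x := by
  have hs : MeasurableSet ({(0:ℝ)}ᶜ) := (measurableSet_singleton 0).compl
  have himg : Inv.inv '' ({(0:ℝ)}ᶜ) = {(0:ℝ)}ᶜ := by
    ext y
    simp only [Set.mem_image, Set.mem_compl_iff, Set.mem_singleton_iff]
    constructor
    · rintro ⟨x, hx, rfl⟩; exact inv_ne_zero hx
    · intro hy; exact ⟨y⁻¹, inv_ne_zero hy, inv_inv y⟩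
  have hderiv : ∀ x ∈ ({(0:ℝ)}ᶜ : Set ℝ),
      HasFDerivWithinAt Inv.inv ((1 : ℝ →L[ℝ] ℝ).smulRight (-(x ^ 2)⁻¹)) ({(0:ℝ)}ᶜ) x := by
    intro x hx
    exact ((hasDerivAt_inv (by simpa using hx)).hasFDerivAt).hasFDerivWithinAt
  have hinj : Set.InjOn Inv.inv ({(0:ℝ)}ᶜ : Set ℝ) := fun a _ b _ h => inv_injective h
  have key := lintegral_image_eq_lintegral_abs_det_fderiv_mul volume hs hderiv hinj g
  rw [himg, MeasureTheory.restrict_compl_singleton] at key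
  rw [key]
  exact lintegral_congr fun x => by rw [show ((1 : ℝ →L[ℝ] ℝ).smulRight (-(x ^ 2)⁻¹)) = ContinuousLinearMap.toSpanSingleton ℝ (-(x ^ 2)⁻¹) by ext; simp, ContinuousLinearMap.det_toSpanSingleton, abs_neg]

lemma scalar_id {d : ℕ} (hd : 2 ≤ d) {s : ℝ} (hs : s ≠ 0) :
    |s|⁻¹ ^ d * |((s⁻¹) ^ (d-2))⁻¹| = |(s ^ 2)⁻¹| := by
  have h2 : d - 2 + 2 = d := Nat.sub_add_cancel hd
  have habs : |s| ≠ 0 := abs_ne_zero.2 hs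
  rw [abs_inv, abs_pow, abs_inv, abs_inv, abs_pow, inv_pow, inv_pow, inv_inv, ← h2, pow_add]
  field_simp
  rw [Nat.add_sub_cancel]

lemma key_lemma (d : ℕ) (hd : 2 ≤ d)
    (f : EuclideanSpace ℝ (Fin (d-2)) × ℝ × ℝ → ℝ≥0∞) (hf : Measurable f)
    (x : EuclideanSpace ℝ (Fin (d-2)) × ℝ × ℝ) :
    Rsharp d (Jnn d f) x = Rsharp d f (x.1, x.2.2, x.2.1) := by
  obtain ⟨x1, x2, x3⟩ := x
  have hinner : Measurable fun y : EuclideanSpace ℝ (Fin (d-2)) × ℝ => (inner ℝ y.1 x1 : ℝ) :=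
    (continuous_fst.inner continuous_const).measurable
  set F : EuclideanSpace ℝ (Fin (d-2)) × ℝ → ℝ≥0∞ :=
    fun y => f (y.1, y.2, x2 + (inner ℝ y.1 x1 + y.2 * x3)) with hFdef
  have hmapF : Measurable fun y : EuclideanSpace ℝ (Fin (d-2)) × ℝ =>
      ((y.1, y.2, x2 + (inner ℝ y.1 x1 + y.2 * x3)) : EuclideanSpace ℝ (Fin (d-2)) × ℝ × ℝ) :=
    measurable_fst.prodMk (measurable_snd.prodMk
      (measurable_const.add (hinner.add (measurable_snd.mul measurable_const))))
  have hF : Measurable F := hf.comp hmapF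
  set G : EuclideanSpace ℝ (Fin (d-2)) × ℝ → ℝ≥0∞ := fun y =>
    if y.2 = 0 then 0 else
      ENNReal.ofReal (|y.2|⁻¹ ^ d) *
        f (y.2⁻¹ • y.1, y.2⁻¹, y.2⁻¹ * (x3 + (inner ℝ y.1 x1 + y.2 * x2))) with hGdef
  have hmapG : Measurable fun y : EuclideanSpace ℝ (Fin (d-2)) × ℝ =>
      ((y.2⁻¹ • y.1, y.2⁻¹, y.2⁻¹ * (x3 + (inner ℝ y.1 x1 + y.2 * x2)))
        : EuclideanSpace ℝ (Fin (d-2)) × ℝ × ℝ) :=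
    (measurable_snd.inv.smul measurable_fst).prodMk
      (measurable_snd.inv.prodMk (measurable_snd.inv.mul
        (measurable_const.add (hinner.add (measurable_snd.mul measurable_const)))))
  have hG : Measurable G := by
    refine Measurable.ite (measurable_snd (measurableSet_singleton 0)) measurable_const ?_
    exact ((measurable_snd.abs.inv.pow_const d).ennreal_ofReal).mul (hf.comp hmapG)
  have hL : Rsharp d (Jnn d f) (x1, x2, x3) = ∫⁻ y : EuclideanSpace ℝ (Fin (d-2)) × ℝ, G y := rfl
  have hR : Rsharp d f (x1, x3, x2) = ∫⁻ y : EuclideanSpace ℝ (Fin (d-2)) × ℝ, F y := rfl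
  show Rsharp d (Jnn d f) (x1, x2, x3) = Rsharp d f (x1, x3, x2)
  rw [hL, hR, Measure.volume_eq_prod, lintegral_prod_symm _ hG.aemeasurable,
    lintegral_prod_symm _ hF.aemeasurable]
  set H : ℝ → ℝ≥0∞ := fun s => ∫⁻ u : EuclideanSpace ℝ (Fin (d-2)), F (u, s) with hHdef
  have hHm : ∀ s : ℝ, Measurable fun u : EuclideanSpace ℝ (Fin (d-2)) => F (u, s) := fun s =>
    hF.comp (measurable_id.prodMk measurable_const)
  have step : ∀ s : ℝ, (∫⁻ u : EuclideanSpace ℝ (Fin (d-2)), G (u, s))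
      = ENNReal.ofReal |(s ^ 2)⁻¹| * H s⁻¹ := by
    intro s
    by_cases hs : s = 0
    · subst hs
      simp [hGdef]
    · have h1 : ∀ u : EuclideanSpace ℝ (Fin (d-2)),
          G (u, s) = ENNReal.ofReal (|s|⁻¹ ^ d) * F (s⁻¹ • u, s⁻¹) := by
        intro u
        rw [hGdef, hFdef]
        simp only [if_neg hs]
        congr 2
        rw [real_inner_smul_left]
        field_simp
        ring
      calc (∫⁻ u : EuclideanSpace ℝ (Fin (d-2)), G (u, s))
          = ∫⁻ u : EuclideanSpace ℝ (Fin (d-2)),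
              ENNReal.ofReal (|s|⁻¹ ^ d) * F (s⁻¹ • u, s⁻¹) := lintegral_congr h1
        _ = ENNReal.ofReal (|s|⁻¹ ^ d) *
              ∫⁻ u : EuclideanSpace ℝ (Fin (d-2)), F (s⁻¹ • u, s⁻¹) :=
            lintegral_const_mul _ ((hHm s⁻¹).comp (measurable_const_smul _))
        _ = ENNReal.ofReal (|s|⁻¹ ^ d) *
              (ENNReal.ofReal |((s⁻¹) ^ (d-2))⁻¹| * H s⁻¹) := by
            rw [lintegral_comp_smul_E (fun z => F (z, s⁻¹)) (hHm s⁻¹) (inv_ne_zero hs)]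
        _ = ENNReal.ofReal |(s ^ 2)⁻¹| * H s⁻¹ := by
            rw [← mul_assoc, ← ENNReal.ofReal_mul (by positivity), scalar_id hd hs]
  calc (∫⁻ s : ℝ, ∫⁻ u : EuclideanSpace ℝ (Fin (d-2)), G (u, s))
      = ∫⁻ s : ℝ, ENNReal.ofReal |(s ^ 2)⁻¹| * H s⁻¹ := lintegral_congr step
    _ = ∫⁻ s : ℝ, H s := lintegral_inv_change H
    _ = ∫⁻ s : ℝ, ∫⁻ u : EuclideanSpace ℝ (Fin (d-2)), F (u, s) := rfl

/-- `‖R♯(Jf)‖_{L^{d+1}} = ‖R♯ f‖_{L^{d+1}}` for nonnegative measurable `f`. -/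
theorem stmt4 (d : ℕ) (hd : 2 ≤ d)
    (f : EuclideanSpace ℝ (Fin (d-2)) × ℝ × ℝ → ℝ≥0∞) (hf : Measurable f) :
    (∫⁻ x, (Rsharp d (Jnn d f) x) ^ (d+1)) ^ ((1:ℝ)/(d+1))
      = (∫⁻ x, (Rsharp d f x) ^ (d+1)) ^ ((1:ℝ)/(d+1)) := by
  congr 1
  have hpair : Measurable fun p :
      (EuclideanSpace ℝ (Fin (d-2)) × ℝ × ℝ) × (EuclideanSpace ℝ (Fin (d-2)) × ℝ) =>
      ((p.2.1, p.2.2, p.1.2.2 + (inner ℝ p.2.1 p.1.1 + p.2.2 * p.1.2.1))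
        : EuclideanSpace ℝ (Fin (d-2)) × ℝ × ℝ) := by
    have hi : Measurable fun p :
        (EuclideanSpace ℝ (Fin (d-2)) × ℝ × ℝ) × (EuclideanSpace ℝ (Fin (d-2)) × ℝ) =>
        (inner ℝ p.2.1 p.1.1 : ℝ) :=
      ((continuous_fst.comp continuous_snd).inner (continuous_fst.comp continuous_fst)).measurable
    exact (measurable_snd.fst).prodMk ((measurable_snd.snd).prodMk
      ((measurable_fst.snd.snd).add (hi.add (measurable_snd.snd.mul measurable_fst.snd.fst))))
  have hRf : Measurable (Rsharp d f) := (hf.comp hpair).lintegral_prod_right'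
  have hT : MeasurePreserving
      (fun x : EuclideanSpace ℝ (Fin (d-2)) × ℝ × ℝ => (x.1, x.2.2, x.2.1)) volume volume := by
    have h := (MeasurePreserving.id (volume : Measure (EuclideanSpace ℝ (Fin (d-2))))).prod
      (Measure.measurePreserving_swap (μ := (volume : Measure ℝ)) (ν := (volume : Measure ℝ)))
    exact h
  calc (∫⁻ x, Rsharp d (Jnn d f) x ^ (d+1))
      = ∫⁻ x, (fun y => Rsharp d f y ^ (d+1)) (x.1, x.2.2, x.2.1) :=
        lintegral_congr fun x => by rw [key_lemma d hd f hf x]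
    _ = ∫⁻ x, Rsharp d f x ^ (d+1) := hT.lintegral_comp (hRf.pow_const _)
end

section
/- Let F: ℝ → ℝ be continuous, nonnegative, tending to 0 at ±∞, and let E(s) = {t : F(t) > s}. If for some 0 < ρ < s ≤ sup F the measures |E(ρ)| and |E(s)| are equal and finite, with |{t : F(t) = s}| = 0, then a contradiction arises; equivalently: for every s with 0 < s < sup F and |{t : F(t) = s}| = 0 and every ε > 0, the set {r ∈ (0,s) : |E(s)| < |E(r)| < |E(s)| + ε} has positive Lebesgue measure. -/
open MeasureTheory
open scoped ENNReal

/-- Let `F : ℝ → [0,∞)` be continuous with `F → 0` at `±∞`, and `E(s) = {t : F t > s}`.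
For every `s` with `0 < s < sup F` whose level set `{F = s}` is null, and every
`ε > 0`, the set `{r ∈ (0,s) : |E(s)| < |E(r)| < |E(s)| + ε}` has positive measure. -/
theorem stmt19 (F : ℝ → ℝ) (hcont : Continuous F) (hnonneg : ∀ t, 0 ≤ F t)
    (htop : Filter.Tendsto F Filter.atTop (nhds 0))
    (hbot : Filter.Tendsto F Filter.atBot (nhds 0))
    (s : ℝ) (hs : 0 < s) (hsup : ∃ t, s < F t)
    (hlevel : volume {t : ℝ | F t = s} = 0)
    (ε : ℝ) (hε : 0 < ε) :
    0 < volume {r ∈ Set.Ioo 0 s |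
      volume {t : ℝ | s < F t} < volume {t : ℝ | r < F t} ∧
      volume {t : ℝ | r < F t} < volume {t : ℝ | s < F t} + ENNReal.ofReal ε} := by
  have hmeas : ∀ r : ℝ, MeasurableSet {t : ℝ | r < F t} := fun r =>
    (isOpen_lt continuous_const hcont).measurableSet
  -- finiteness of superlevel measures for positive level
  have hfin : ∀ r : ℝ, 0 < r → volume {t : ℝ | r < F t} < ⊤ := by
    intro r hr
    have h1 : ∀ᶠ t in Filter.atTop, F t < r := htop.eventually_lt_const hr
    have h2 : ∀ᶠ t in Filter.atBot, F t < r := hbot.eventually_lt_const hr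
    obtain ⟨M, hM⟩ := h1.exists_forall_of_atTop
    obtain ⟨N, hN⟩ := h2.exists_forall_of_atBot
    have hsub : {t : ℝ | r < F t} ⊆ Set.Icc N M := by
      intro t ht
      constructor
      · by_contra h; push_neg at h
        exact absurd (hN t h.le) (not_lt.2 ht.le)
      · by_contra h; push_neg at h
        exact absurd (hM t h.le) (not_lt.2 ht.le)
    exact lt_of_le_of_lt (measure_mono hsub) (by simp [lt_top_iff_ne_top])
  have hfs : volume {t : ℝ | s < F t} ≠ ⊤ := (hfin s hs).ne
  -- for each r ∈ (0,s), the open set {r < F < s} is nonempty, so has positive measure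
  have hpos : ∀ r : ℝ, 0 < r → r < s → 0 < volume {t : ℝ | r < F t ∧ F t < s} := by
    intro r hr hrs
    have hopen : IsOpen {t : ℝ | r < F t ∧ F t < s} :=
      (isOpen_lt continuous_const hcont).inter (isOpen_lt hcont continuous_const)
    obtain ⟨t₀, ht₀⟩ := hsup
    obtain ⟨t₁, ht₁, ht₀₁⟩ := ((htop.eventually_lt_const hr).and
      (Filter.eventually_ge_atTop t₀)).exists
    have hivt := intermediate_value_Icc' ht₀₁ (hcont.continuousOn (s := Set.Icc t₀ t₁))
    have hc : (r + s) / 2 ∈ Set.Icc (F t₁) (F t₀) := by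
      constructor
      · linarith
      · linarith
    obtain ⟨t, -, htc⟩ := hivt hc
    have hne : {t : ℝ | r < F t ∧ F t < s}.Nonempty := ⟨t, by
      constructor <;> simp only [htc] <;> linarith⟩
    exact hopen.measure_pos volume hne
  -- find r₀ ∈ (0, s) with volume {r₀ < F < s} < ε
  have hexr : ∃ r₀ : ℝ, 0 < r₀ ∧ r₀ < s ∧
      volume {t : ℝ | r₀ < F t ∧ F t < s} < ENNReal.ofReal ε := by
    set u : ℕ → ℝ := fun n => s - (s / 2) * ((n : ℝ) + 1)⁻¹ with hu
    have hu_lt : ∀ n, u n < s := by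
      intro n
      have h : (0:ℝ) < (s / 2) * ((n : ℝ) + 1)⁻¹ := by positivity
      show s - (s / 2) * ((n : ℝ) + 1)⁻¹ < s
      linarith
    have hu_pos : ∀ n, 0 < u n := by
      intro n
      have h1 : ((n : ℝ) + 1)⁻¹ ≤ 1 := by
        rw [inv_le_one_iff₀]; right; linarith [Nat.cast_nonneg (α := ℝ) n]
      have h2 : (s / 2) * ((n : ℝ) + 1)⁻¹ ≤ s / 2 * 1 :=
        mul_le_mul_of_nonneg_left h1 (by linarith)
      show 0 < s - (s / 2) * ((n : ℝ) + 1)⁻¹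
      nlinarith
    have hu_mono : Monotone u := by
      intro a b hab
      have h : ((b : ℝ) + 1)⁻¹ ≤ ((a : ℝ) + 1)⁻¹ := by
        apply inv_anti₀ (by positivity)
        have : (a : ℝ) ≤ b := Nat.cast_le.2 hab
        linarith
      show s - (s / 2) * ((a : ℝ) + 1)⁻¹ ≤ s - (s / 2) * ((b : ℝ) + 1)⁻¹
      nlinarith
    have hu_tendsto : Filter.Tendsto u Filter.atTop (nhds s) := by
      have h1 : Filter.Tendsto (fun n : ℕ => ((n : ℝ) + 1)⁻¹) Filter.atTop (nhds 0) := by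
        have := tendsto_one_div_add_atTop_nhds_zero_nat (𝕜 := ℝ)
        simpa [one_div] using this
      have h2 := ((h1.const_mul (s / 2)).const_sub s)
      simpa using h2
    set A : ℕ → Set ℝ := fun n => {t : ℝ | u n < F t ∧ F t < s} with hA
    have hAmeas : ∀ n, NullMeasurableSet (A n) volume := fun n =>
      (((isOpen_lt continuous_const hcont).inter
        (isOpen_lt hcont continuous_const)).measurableSet).nullMeasurableSet
    have hAanti : Antitone A := by
      intro a b hab t ht
      exact ⟨lt_of_le_of_lt (hu_mono hab) ht.1, ht.2⟩
    have hAfin : ∃ n, volume (A n) ≠ ⊤ := by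
      refine ⟨0, ?_⟩
      have : A 0 ⊆ {t : ℝ | u 0 < F t} := fun t ht => ht.1
      exact (lt_of_le_of_lt (measure_mono this) (hfin _ (hu_pos 0))).ne
    have hAempty : ⋂ n, A n = ∅ := by
      ext t
      simp only [Set.mem_iInter, Set.mem_empty_iff_false, iff_false]
      intro h
      have hge : s ≤ F t := le_of_tendsto hu_tendsto
        (Filter.Eventually.of_forall fun n => (h n).1.le)
      exact absurd (h 0).2 (not_lt.2 hge)
    have hlim := tendsto_measure_iInter_atTop hAmeas hAanti hAfin
    rw [hAempty] at hlim
    simp only [measure_empty] at hlim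
    have hεpos : (0:ℝ≥0∞) < ENNReal.ofReal ε := ENNReal.ofReal_pos.2 hε
    obtain ⟨n, hn⟩ := ((hlim.eventually_lt_const hεpos).and
      (Filter.eventually_ge_atTop 0)).exists
    exact ⟨u n, hu_pos n, hu_lt n, hn.1⟩
  obtain ⟨r₀, hr₀, hr₀s, hr₀ε⟩ := hexr
  -- the target set contains Ioo r₀ s
  have hsub : Set.Ioo r₀ s ⊆ {r ∈ Set.Ioo 0 s |
      volume {t : ℝ | s < F t} < volume {t : ℝ | r < F t} ∧
      volume {t : ℝ | r < F t} < volume {t : ℝ | s < F t} + ENNReal.ofReal ε} := by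
    intro r ⟨hr1, hr2⟩
    have hrpos : 0 < r := lt_trans hr₀ hr1
    refine ⟨⟨hrpos, hr2⟩, ?_, ?_⟩
    · -- strict lower bound
      have hdisj : Disjoint {t : ℝ | s < F t} {t : ℝ | r < F t ∧ F t < s} := by
        rw [Set.disjoint_left]
        intro t ht ht'
        exact absurd ht'.2 (not_lt.2 ht.le)
      have hunion : {t : ℝ | s < F t} ∪ {t : ℝ | r < F t ∧ F t < s} ⊆ {t : ℝ | r < F t} := by
        intro t ht
        rcases ht with ht | ht
        · exact lt_trans hr2 ht
        · exact ht.1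
      have h1 : volume {t : ℝ | s < F t} + volume {t : ℝ | r < F t ∧ F t < s}
          ≤ volume {t : ℝ | r < F t} := by
        rw [← measure_union hdisj (((isOpen_lt continuous_const hcont).inter
          (isOpen_lt hcont continuous_const)).measurableSet)]
        exact measure_mono hunion
      calc volume {t : ℝ | s < F t}
          < volume {t : ℝ | s < F t} + volume {t : ℝ | r < F t ∧ F t < s} :=
            ENNReal.lt_add_right hfs (hpos r hrpos hr2).ne'
        _ ≤ volume {t : ℝ | r < F t} := h1
    · -- strict upper bound
      have hcover : {t : ℝ | r < F t} ⊆ {t : ℝ | s < F t} ∪ {t : ℝ | F t = s}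
          ∪ {t : ℝ | r₀ < F t ∧ F t < s} := by
        intro t ht
        rcases lt_trichotomy (F t) s with h | h | h
        · exact Or.inr ⟨lt_trans hr1 ht, h⟩
        · exact Or.inl (Or.inr h)
        · exact Or.inl (Or.inl h)
      calc volume {t : ℝ | r < F t}
          ≤ volume ({t : ℝ | s < F t} ∪ {t : ℝ | F t = s})
            + volume {t : ℝ | r₀ < F t ∧ F t < s} :=
            le_trans (measure_mono hcover) (measure_union_le _ _)
        _ ≤ volume {t : ℝ | s < F t} + volume {t : ℝ | F t = s}
            + volume {t : ℝ | r₀ < F t ∧ F t < s} := by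
            gcongr; exact measure_union_le _ _
        _ = volume {t : ℝ | s < F t} + volume {t : ℝ | r₀ < F t ∧ F t < s} := by
            rw [hlevel]; ring
        _ < volume {t : ℝ | s < F t} + ENNReal.ofReal ε :=
            ENNReal.add_lt_add_left hfs hr₀ε
  calc (0:ℝ≥0∞) < volume (Set.Ioo r₀ s) := by
        rw [Real.volume_Ioo]; exact ENNReal.ofReal_pos.2 (by linarith)
    _ ≤ _ := measure_mono hsub
end
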